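/- The symmetric 3×3 integer matrix with rows (2n, 3, d), (3, 0, a), (d, a, -2) has signature (1,2) whenever n ≥ 4, d > 0, a > 0 are integers satisfying d > na/3 - 3/a. -/

import Mathlib

theorem stmt0 (n d a : ℤ) (hn : 4 ≤ n) (hd : 0 < d) (ha : 0 < a)
    (hineq : n * a ^ 2 - 9 < 3 * d * a)
    (M : Matrix (Fin 3) (Fin 3) ℝ)
    (hM : M = !![2 * (n : ℝ), 3, (d : ℝ); 3, 0, (a : ℝ); (d : ℝ), (a : ℝ), -2])
    (hHerm : M.IsHermitian) :
    Nat.card {i : Fin 3 // 0 < hHerm.eigenvalues i} = 1 ∧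
    Nat.card {i : Fin 3 // hHerm.eigenvalues i < 0} = 2 := by
  classical
  set L := hHerm.eigenvalues with hL
  have hdet : (0:ℝ) < M.det := by
    rw [hM, Matrix.det_fin_three]
    have : (n:ℝ) * (a:ℝ)^2 - 9 < 3 * d * a := by exact_mod_cast hineq
    simp [Matrix.cons_val_zero, Matrix.cons_val_one]
    nlinarith [this]
  have hprod : M.det = L 0 * L 1 * L 2 := by
    rw [hHerm.det_eq_prod_eigenvalues, Fin.prod_univ_three]
    norm_num
    rfl
  have hprodpos : 0 < L 0 * L 1 * L 2 := hprod ▸ hdet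
  have hne0 : L 0 ≠ 0 := by intro h; rw [h] at hprodpos; simp at hprodpos
  have hne1 : L 1 ≠ 0 := by intro h; rw [h] at hprodpos; simp at hprodpos
  have hne2 : L 2 ≠ 0 := by intro h; rw [h] at hprodpos; simp at hprodpos
  have hnotall : ¬ (0 < L 0 ∧ 0 < L 1 ∧ 0 < L 2) := by
    rintro ⟨h0, h1, h2⟩
    have hpos : ∀ i, 0 ≤ L i := by
      intro i; fin_cases i <;> [exact h0.le; exact h1.le; exact h2.le]
    have hsd : M.PosSemidef := (hHerm.posSemidef_iff_eigenvalues_nonneg).2 hpos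
    have hc := hsd.re_dotProduct_nonneg (Pi.single 2 1)
    rw [hM] at hc
    simp [dotProduct, Matrix.mulVec, Fin.sum_univ_three, Pi.single_apply] at hc
    linarith
  have key : ∀ (P : Fin 3 → Prop) [DecidablePred P], Nat.card {i // P i} =
      (if P 0 then 1 else 0) + (if P 1 then 1 else 0) + (if P 2 then 1 else 0) := by
    intro P _
    rw [Nat.card_eq_fintype_card, Fintype.card_subtype, Finset.card_filter,
      Fin.sum_univ_three]
  rw [key, key]
  rcases hne0.lt_or_gt with h0 | h0 <;> rcases hne1.lt_or_gt with h1 | h1 <;>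
    rcases hne2.lt_or_gt with h2 | h2
  · exact absurd hprodpos (by nlinarith [mul_pos_of_neg_of_neg h0 h1])
  · refine ⟨?_, ?_⟩ <;> simp [h0, h1, h2, h0.asymm, h1.asymm, h2.asymm]
  · refine ⟨?_, ?_⟩ <;> simp [h0, h1, h2, h0.asymm, h1.asymm, h2.asymm]
  · exact absurd hprodpos (by nlinarith [mul_pos h1 h2])
  · refine ⟨?_, ?_⟩ <;> simp [h0, h1, h2, h0.asymm, h1.asymm, h2.asymm]
  · exact absurd hprodpos (by nlinarith [mul_pos h0 h2])
  · exact absurd hprodpos (by nlinarith [mul_pos h0 h1])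
  · exact absurd ⟨h0, h1, h2⟩ hnotall
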